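/- arXiv:1808.03066 — 2 statements merged into one kernel-verified Lean document; each statement's English description precedes it below -/
import Mathlib

section
/- Define G_n(t) = det 𝓜ᴰ_n for n ≥ 2 and G_1(t) = 1. Then for n ≥ 2: G_n(t) = Σ_{i=1}^{n-1} (-1)^{i-1} t^{C(i,2)} G_{n-i}(t) + (-1)^{n-1} (2t^{C(n,2)} - t^{n(n-1)}). -/
open Polynomial

/-- The `n × n` matrix `𝓜ᴰ_n` over `ℤ[t]`: its `(i, n)` entry (1-based) is
`2t^{C(n-i+1,2)} - t^{(n-i+1)(n-i)}`, and for `j < n` its `(i,j)` entry is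
`t^{C(j-i+1,2)}` when `j - i + 1 ≥ 0` and `0` otherwise. -/
noncomputable def MatD (n : ℕ) : Matrix (Fin n) (Fin n) (Polynomial ℤ) :=
  Matrix.of fun i j =>
    if (j : ℕ) = n - 1 then
      2 * (X : Polynomial ℤ) ^ ((n - (i : ℕ)).choose 2) -
        (X : Polynomial ℤ) ^ ((n - (i : ℕ)) * (n - (i : ℕ) - 1))
    else if (i : ℕ) ≤ (j : ℕ) + 1 then (X : Polynomial ℤ) ^ (((j : ℕ) + 1 - (i : ℕ)).choose 2)
    else 0

/-- `G_m = det 𝓜ᴰ_m` for `m ≥ 2`, and `G_1 = 1`. -/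
noncomputable def polyG (m : ℤ) : Polynomial ℤ :=
  if 2 ≤ m then (MatD m.toNat).det else 1

lemma matD_one_det : (MatD 1).det = 1 := by
  rw [Matrix.det_fin_one]
  simp [MatD]
  norm_num

lemma matD_shift (n : ℕ) (i j : Fin n) : MatD (n+1) i.succ j.succ = MatD n i j := by
  have hi : (i : ℕ) < n := i.isLt
  have hj : (j : ℕ) < n := j.isLt
  simp only [MatD, Matrix.of_apply, Fin.val_succ]
  have h1 : ((j : ℕ) + 1 = n + 1 - 1) ↔ ((j : ℕ) = n - 1) := by omega
  have h2 : ((i : ℕ) + 1 ≤ (j : ℕ) + 1 + 1) ↔ ((i : ℕ) ≤ (j : ℕ) + 1) := by omega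
  have h3 : n + 1 - ((i : ℕ) + 1) = n - (i : ℕ) := by omega
  have h4 : (j : ℕ) + 1 + 1 - ((i : ℕ) + 1) = (j : ℕ) + 1 - (i : ℕ) := by omega
  rw [h3, h4]
  by_cases hc : (j : ℕ) = n - 1
  · rw [if_pos (by omega), if_pos hc]
  · rw [if_neg (by omega), if_neg hc]
    exact if_congr h2 rfl rfl

lemma minor_det : ∀ (n : ℕ) (j : Fin (n+1)),
    ((MatD (n+1)).submatrix Fin.succ j.succAbove).det
      = if (j : ℕ) = n then 1 else (MatD (n - (j : ℕ))).det := by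
  intro n
  induction n with
  | zero =>
    intro j
    fin_cases j
    simp [Matrix.det_fin_zero]
  | succ n ih =>
    intro j
    induction j using Fin.cases with
    | zero =>
      have : (MatD (n+2)).submatrix Fin.succ (Fin.succAbove 0) = MatD (n+1) := by
        ext r c
        rw [Matrix.submatrix_apply, Fin.zero_succAbove, matD_shift]
      rw [this]
      simp
      rfl
    | succ j' =>
      set N := (MatD (n+2)).submatrix Fin.succ j'.succ.succAbove with hN
      have hcol : ∀ r : Fin (n+1), N r 0 = if r = 0 then 1 else 0 := by
        intro r
        rw [hN, Matrix.submatrix_apply, Fin.succ_succAbove_zero]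
        simp only [MatD, Matrix.of_apply, Fin.val_succ]
        rw [Fin.val_zero]
        rw [if_neg (by omega)]
        by_cases hr : r = 0
        · subst hr; simp
        · rw [if_neg (by simp only [Fin.ext_iff, Fin.val_zero] at hr; omega), if_neg hr]
      have hsub : N.submatrix Fin.succ Fin.succ
          = (MatD (n+1)).submatrix Fin.succ j'.succAbove := by
        ext r c
        simp only [Matrix.submatrix_apply, hN]
        rw [Fin.succ_succAbove_succ, matD_shift]
      rw [Matrix.det_succ_column_zero]
      rw [Fin.sum_univ_succ]
      have hz : ∀ r : Fin n, (-1 : Polynomial ℤ) ^ ((r.succ : Fin (n+1)) : ℕ) *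
          N r.succ 0 * ((N.submatrix r.succ.succAbove Fin.succ).det) = 0 := by
        intro r
        rw [hcol r.succ, if_neg (Fin.succ_ne_zero r)]
        ring
      rw [Finset.sum_congr rfl (fun r _ => hz r), Finset.sum_const_zero, add_zero]
      rw [hcol 0, if_pos rfl]
      have h0 : ((0 : Fin (n+1)) : ℕ) = 0 := rfl
      rw [h0, pow_zero, one_mul, one_mul]
      have : (0 : Fin (n+1)).succAbove = Fin.succ := by
        ext c : 1
        rw [Fin.zero_succAbove]
      rw [this, hsub, ih j']
      have hval : ((j'.succ : Fin (n+2)) : ℕ) = (j' : ℕ) + 1 := rfl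
      simp only [hval]
      by_cases hc : (j' : ℕ) = n
      · rw [if_pos hc, if_pos (by omega)]
      · rw [if_neg hc, if_neg (by omega)]
        have h5 : n + 1 - ((j'.succ : Fin (n+2)) : ℕ) = n - (j' : ℕ) := by
          simp only [Fin.val_succ]; omega
        rw [h5]

/-- `G_n(t) = ∑_{i=1}^{n-1} (-1)^{i-1} t^{C(i,2)} G_{n-i}(t)
      + (-1)^{n-1} (2t^{C(n,2)} - t^{n(n-1)})` for `n ≥ 2`. -/
theorem polyG_recurrence :
    ∀ n : ℕ, 2 ≤ n → polyG n =
      (∑ i ∈ Finset.range (n - 1),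
          (-1 : Polynomial ℤ) ^ i * ((X : Polynomial ℤ) ^ ((i + 1).choose 2) * polyG ((n : ℤ) - (i + 1)))) +
        (-1 : Polynomial ℤ) ^ (n - 1) *
          (2 * (X : Polynomial ℤ) ^ (n.choose 2) - (X : Polynomial ℤ) ^ (n * (n - 1))) := by
  intro n hn
  obtain ⟨m, rfl⟩ : ∃ m, n = m + 1 := ⟨n - 1, by omega⟩
  have hm : 1 ≤ m := by omega
  have hG : polyG (m + 1 : ℕ) = (MatD (m+1)).det := by
    rw [polyG, if_pos (by exact_mod_cast hn)]
    simp
  rw [hG, Matrix.det_succ_row_zero, Fin.sum_univ_castSucc]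
  -- last term
  have hlast : (-1 : Polynomial ℤ) ^ ((Fin.last m : Fin (m+1)) : ℕ) *
      MatD (m+1) 0 (Fin.last m) *
      ((MatD (m+1)).submatrix Fin.succ (Fin.last m).succAbove).det
      = (-1 : Polynomial ℤ) ^ (m + 1 - 1) *
        (2 * (X : Polynomial ℤ) ^ ((m+1).choose 2) -
          (X : Polynomial ℤ) ^ ((m+1) * (m + 1 - 1))) := by
    rw [minor_det m (Fin.last m), if_pos (by simp), mul_one]
    have h1 : ((Fin.last m : Fin (m+1)) : ℕ) = m := rfl
    have h2 : MatD (m+1) 0 (Fin.last m)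
        = 2 * (X : Polynomial ℤ) ^ ((m+1).choose 2) -
          (X : Polynomial ℤ) ^ ((m+1) * (m + 1 - 1)) := by
      simp only [MatD, Matrix.of_apply, h1, Fin.val_zero]
      rw [if_pos (by omega)]
      norm_num
    rw [h1, h2]
    norm_num
  rw [hlast]
  congr 1
  -- main sum
  have hterm : ∀ j : Fin m, (-1 : Polynomial ℤ) ^ ((j.castSucc : Fin (m+1)) : ℕ) *
      MatD (m+1) 0 j.castSucc *
      ((MatD (m+1)).submatrix Fin.succ j.castSucc.succAbove).det
      = (-1 : Polynomial ℤ) ^ (j : ℕ) *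
        ((X : Polynomial ℤ) ^ (((j : ℕ) + 1).choose 2) * polyG (((m:ℤ) + 1) - ((j : ℕ) + 1))) := by
    intro j
    have hjlt : (j : ℕ) < m := j.isLt
    have hcs : ((j.castSucc : Fin (m+1)) : ℕ) = (j : ℕ) := rfl
    have hentry : MatD (m+1) 0 j.castSucc = (X : Polynomial ℤ) ^ (((j : ℕ) + 1).choose 2) := by
      simp only [MatD, Matrix.of_apply, hcs, Fin.val_zero]
      rw [if_neg (by omega), if_pos (by omega)]
      norm_num
    rw [hcs, hentry, minor_det m j.castSucc, hcs, if_neg (by omega)]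
    have hpoly : polyG (((m:ℤ) + 1) - ((j : ℕ) + 1)) = (MatD (m - (j : ℕ))).det := by
      have heq : ((m:ℤ) + 1) - ((j : ℕ) + 1) = ((m - (j:ℕ) : ℕ) : ℤ) := by
        push_cast [Nat.cast_sub hjlt.le]; ring
      rw [heq, polyG]
      by_cases h2 : 2 ≤ m - (j : ℕ)
      · rw [if_pos (by exact_mod_cast h2)]
        simp
      · have h1 : m - (j : ℕ) = 1 := by omega
        rw [h1, if_neg (by norm_num)]
        exact matD_one_det.symm
    rw [hpoly]
    ring
  rw [Finset.sum_congr rfl (fun j _ => hterm j)]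
  rw [Fin.sum_univ_eq_sum_range
    (fun i => (-1 : Polynomial ℤ) ^ i *
      ((X : Polynomial ℤ) ^ ((i + 1).choose 2) * polyG (((m:ℤ) + 1) - (i + 1)))) m]
  have : m + 1 - 1 = m := by omega
  rw [this]
  apply Finset.sum_congr rfl
  intro i _
  push_cast
  ring_nf
end

section
/- The determinant of the (n+1)×(n+1) matrix 𝓜ᴮ_n (type B) is a polynomial of degree exactly n^2 in t, for n ≥ 1. -/
open Polynomial

/-- The `(n+1) × (n+1)` matrix `𝓜ᴮ_n` over `ℤ[t]`: its `(i, n+1)` entry (1-based) is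
`t^{(n-i+1)^2}`, and for `j ≤ n` its `(i,j)` entry is `t^{C(j-i+1,2)}` when
`j - i + 1 ≥ 0` and `0` otherwise. -/
noncomputable def MatB (n : ℕ) : Matrix (Fin (n + 1)) (Fin (n + 1)) (Polynomial ℤ) :=
  Matrix.of fun i j =>
    if (j : ℕ) = n then (X : Polynomial ℤ) ^ ((n - (i : ℕ)) ^ 2)
    else if (i : ℕ) ≤ (j : ℕ) + 1 then (X : Polynomial ℤ) ^ (((j : ℕ) + 1 - (i : ℕ)).choose 2)
    else 0

private lemma degree_units_smul (u : ℤˣ) (p : Polynomial ℤ) : (u • p).degree = p.degree := by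
  rcases Int.units_eq_one_or u with h | h <;> subst h
  · simp
  · rw [Units.smul_def]
    simp

private lemma choose2_add (a b : ℕ) : a.choose 2 + b.choose 2 ≤ (a + b).choose 2 := by
  induction b with
  | zero => simp
  | succ b ih =>
    have h1 : (b + 1).choose 2 = b + b.choose 2 := by
      rw [Nat.choose_succ_succ' b 1, Nat.choose_one_right]
    have h2 : (a + b + 1).choose 2 = (a + b) + (a + b).choose 2 := by
      rw [Nat.choose_succ_succ' (a + b) 1, Nat.choose_one_right]
    have h3 : a + (b + 1) = a + b + 1 := by omega
    rw [h1, h3, h2]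
    omega

private lemma sum_choose2_le {ι : Type*} (s : Finset ι) (f : ι → ℕ) :
    ∑ i ∈ s, (f i).choose 2 ≤ (∑ i ∈ s, f i).choose 2 := by
  classical
  induction s using Finset.induction_on with
  | empty => simp
  | @insert a s h ih =>
    rw [Finset.sum_insert h, Finset.sum_insert h]
    calc _ ≤ _ + (∑ i ∈ _, f i).choose 2 := Nat.add_le_add_left ih _
      _ ≤ _ := choose2_add _ _

private lemma arith_lemma (n a : ℕ) (h1 : 1 ≤ a) (h2 : a ≤ n) :
    (n - a) ^ 2 + a.choose 2 < n ^ 2 := by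
  obtain ⟨m, rfl⟩ : ∃ m, n = m + a := ⟨n - a, by omega⟩
  obtain ⟨b, rfl⟩ : ∃ b, a = b + 1 := ⟨a - 1, by omega⟩
  have h3 : (b + 1).choose 2 = (b + 1) * b / 2 := by
    rw [Nat.choose_two_right]
    simp
  have h4 : (b + 1) * b / 2 ≤ (b + 1) * b := Nat.div_le_self _ _
  have h5 : m + (b + 1) - (b + 1) = m := by omega
  have h6 : (m + (b + 1)) ^ 2 = m ^ 2 + 2 * m * (b + 1) + (b + 1) * b + (b + 1) := by ring
  rw [h5, h3, h6]
  have h7 : 0 ≤ 2 * m * (b + 1) := Nat.zero_le _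
  omega

private lemma sum_expo_lt (n : ℕ) (σ : Equiv.Perm (Fin (n + 1)))
    (h : ∀ j : Fin (n + 1), (j : ℕ) ≠ n → (σ j : ℕ) ≤ (j : ℕ) + 1)
    (hne : σ ≠ finRotate (n + 1)) :
    (∑ j : Fin (n + 1),
      if (j : ℕ) = n then (n - (σ j : ℕ)) ^ 2 else (((j : ℕ) + 1 - (σ j : ℕ)).choose 2)) < n ^ 2 := by
  classical
  set a := (σ (Fin.last n) : ℕ) with ha
  have hlast : ∀ j : Fin (n + 1), (j : ℕ) = n ↔ j = Fin.last n := by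
    intro j
    constructor
    · intro hh; exact Fin.ext (by simpa using hh)
    · intro hh; simp [hh]
  have hmem : ∀ j ∈ Finset.univ.erase (Fin.last n), (j : ℕ) ≠ n := by
    intro j hj hh
    exact (Finset.ne_of_mem_erase hj) ((hlast j).1 hh)
  rw [← Finset.add_sum_erase Finset.univ _ (Finset.mem_univ (Fin.last n))]
  rw [Finset.sum_congr rfl (fun j hj => if_neg (hmem j hj))]
  rw [if_pos (Fin.val_last n)]
  -- key sum identity
  have hsum_d : ∑ j ∈ Finset.univ.erase (Fin.last n), ((j : ℕ) + 1 - (σ j : ℕ)) = a := by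
    have e1 : ∑ j ∈ Finset.univ.erase (Fin.last n), (((j : ℕ) + 1 - (σ j : ℕ)) + (σ j : ℕ)) =
        ∑ j ∈ Finset.univ.erase (Fin.last n), ((j : ℕ) + 1) :=
      Finset.sum_congr rfl (fun j hj => by have := h j (hmem j hj); omega)
    rw [Finset.sum_add_distrib] at e1
    have e3 : ∑ j ∈ Finset.univ.erase (Fin.last n), (σ j : ℕ) + a =
        ∑ j : Fin (n + 1), (σ j : ℕ) :=
      Finset.sum_erase_add _ _ (Finset.mem_univ _)
    have e4 : ∑ j : Fin (n + 1), (σ j : ℕ) = ∑ j : Fin (n + 1), (j : ℕ) :=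
      Equiv.sum_comp σ _
    have ecard : (Finset.univ.erase (Fin.last n)).card = n := by
      rw [Finset.card_erase_of_mem (Finset.mem_univ _)]
      simp
    have e5 : ∑ j ∈ Finset.univ.erase (Fin.last n), ((j : ℕ) + 1) =
        ∑ j ∈ Finset.univ.erase (Fin.last n), (j : ℕ) + n := by
      rw [Finset.sum_add_distrib, Finset.sum_const, ecard, smul_eq_mul, mul_one]
    have e6 : ∑ j ∈ Finset.univ.erase (Fin.last n), (j : ℕ) + n =
        ∑ j : Fin (n + 1), (j : ℕ) := by
      have := Finset.sum_erase_add Finset.univ (fun j : Fin (n + 1) => (j : ℕ))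
        (Finset.mem_univ (Fin.last n))
      simpa using this
    omega
  rcases Nat.eq_zero_or_pos a with ha0 | hapos
  · exfalso
    apply hne
    have hall : ∀ j ∈ Finset.univ.erase (Fin.last n), (j : ℕ) + 1 - (σ j : ℕ) = 0 := by
      rw [ha0] at hsum_d
      exact fun j hj => (Finset.sum_eq_zero_iff.mp hsum_d) j hj
    apply Equiv.ext
    intro j
    apply Fin.ext
    rw [coe_finRotate]
    by_cases hj : j = Fin.last n
    · rw [if_pos hj, hj, ← ha, ha0]
    · rw [if_neg hj]
      have h1 := hall j (Finset.mem_erase.mpr ⟨hj, Finset.mem_univ j⟩)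
      have h2 := h j (fun hh => hj ((hlast j).1 hh))
      omega
  · have hale : a ≤ n := Nat.lt_succ_iff.mp (σ (Fin.last n)).isLt
    have hb : ∑ j ∈ Finset.univ.erase (Fin.last n), (((j : ℕ) + 1 - (σ j : ℕ)).choose 2) ≤
        a.choose 2 := by
      calc _ ≤ (∑ j ∈ Finset.univ.erase (Fin.last n), ((j : ℕ) + 1 - (σ j : ℕ))).choose 2 :=
            sum_choose2_le _ _
        _ = a.choose 2 := by rw [hsum_d]
    calc (n - a) ^ 2 + ∑ j ∈ Finset.univ.erase (Fin.last n),
          (((j : ℕ) + 1 - (σ j : ℕ)).choose 2)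
        ≤ (n - a) ^ 2 + a.choose 2 := Nat.add_le_add_left hb _
      _ < n ^ 2 := arith_lemma n a hapos hale

/-- `det 𝓜ᴮ_n` is a polynomial of degree exactly `n²`, for `n ≥ 1`. -/
theorem det_MatB_degree (n : ℕ) (hn : 1 ≤ n) :
    (MatB n).det.degree = ((n ^ 2 : ℕ) : WithBot ℕ) := by
  classical
  set c : Equiv.Perm (Fin (n + 1)) := finRotate (n + 1) with hc
  have hprod_c : (∏ i, MatB n (c i) i) = X ^ (n ^ 2) := by
    rw [Finset.prod_eq_single (Fin.last n)]
    · have h0 : ((c (Fin.last n) : ℕ)) = 0 := by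
        rw [hc, coe_finRotate, if_pos rfl]
      simp [MatB, h0]
    · intro j _ hj
      have hjn : (j : ℕ) ≠ n := fun hh => hj (Fin.ext (by simpa using hh))
      have hcj : ((c j : ℕ)) = (j : ℕ) + 1 := by
        rw [hc, coe_finRotate, if_neg hj]
      simp [MatB, hjn, hcj]
    · simp
  rw [Matrix.det_apply]
  rw [← Finset.add_sum_erase Finset.univ _ (Finset.mem_univ c)]
  have hdc : (Equiv.Perm.sign c • ∏ i, MatB n (c i) i).degree = ((n ^ 2 : ℕ) : WithBot ℕ) := by
    rw [degree_units_smul, hprod_c, degree_X_pow]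
  have key : ∀ σ ∈ Finset.univ.erase c,
      (Equiv.Perm.sign σ • ∏ i, MatB n (σ i) i).degree < ((n ^ 2 : ℕ) : WithBot ℕ) := by
    intro σ hσ
    have hσc : σ ≠ c := Finset.ne_of_mem_erase hσ
    rw [degree_units_smul]
    by_cases hz : ∀ j : Fin (n + 1), (j : ℕ) ≠ n → (σ j : ℕ) ≤ (j : ℕ) + 1
    · have hent : ∀ j : Fin (n + 1), MatB n (σ j) j =
          X ^ (if (j : ℕ) = n then (n - (σ j : ℕ)) ^ 2
               else (((j : ℕ) + 1 - (σ j : ℕ)).choose 2)) := by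
        intro j
        by_cases hj : (j : ℕ) = n
        · simp [MatB, hj]
        · simp [MatB, hj, hz j hj]
      rw [Finset.prod_congr rfl (fun j _ => hent j), Finset.prod_pow_eq_pow_sum, degree_X_pow]
      have := sum_expo_lt n σ hz (by rwa [← hc])
      exact_mod_cast this
    · push_neg at hz
      obtain ⟨j, hj1, hj2⟩ := hz
      have hzero : MatB n (σ j) j = 0 := by
        simp only [MatB, Matrix.of_apply, if_neg hj1]
        rw [if_neg (by omega)]
      rw [Finset.prod_eq_zero (Finset.mem_univ j) (f := fun i => MatB n (σ i) i) hzero,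
        degree_zero]
      exact bot_lt_iff_ne_bot.mpr (by exact_mod_cast WithBot.coe_ne_bot)
  have hrest : (∑ σ ∈ Finset.univ.erase c, Equiv.Perm.sign σ • ∏ i, MatB n (σ i) i).degree <
      ((n ^ 2 : ℕ) : WithBot ℕ) := by
    refine lt_of_le_of_lt (Polynomial.degree_sum_le _ _) ?_
    rw [Finset.sup_lt_iff (bot_lt_iff_ne_bot.mpr (by exact_mod_cast WithBot.coe_ne_bot))]
    exact key
  rw [Polynomial.degree_add_eq_left_of_degree_lt (by rw [hdc]; exact hrest), hdc]
end
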